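/- Let A = kQ/I be a monomial algebra and let p, q be nonzero nontrivial paths with s(p) = t(q). Then (p, q) is a perfect pair if and only if: (P'1) pq ∈ F; (P'2) whenever q' is a nonzero path with t(q') = s(p) and pq' = γδ for some path γ and some δ ∈ F, then q' = qx for some path x; and (P'3) whenever p' is a nonzero path with s(p') = t(q) and p'q = δγ for some path γ and some δ ∈ F, then p' = yp for some path y. Here F is the set of minimal paths contained in I. -/

import Mathlib

universe u v w

/-- A presentation of the `k`-algebra `A` as a monomial algebra `kQ/I` on the quiver
with vertex type `V`: `ι` sends each path of `Q` to its canonical image in `A`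
(with `ι (p.comp q) = ι q * ι p`, so that the paper's concatenation `pq`, defined when
`s(p) = t(q)`, corresponds to the product `ι p * ι q`), and `Z p` means `p ∈ I`. -/
structure MonomialPresentation (k : Type u) (A : Type v) (V : Type w)
    [Field k] [Ring A] [Algebra k A] [Quiver.{w} V] [Fintype V] : Type (max u v w) where
  ι : ∀ {i j : V}, Quiver.Path i j → A
  Z : ∀ {i j : V}, Quiver.Path i j → Prop
  zero_iff : ∀ {i j : V} (p : Quiver.Path i j), ι p = 0 ↔ Z p
  mul_comp : ∀ {i j l : V} (p : Quiver.Path i j) (q : Quiver.Path j l),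
    ι (p.comp q) = ι q * ι p
  orth : ∀ i j : V, i ≠ j →
    ι (Quiver.Path.nil : Quiver.Path i i) * ι (Quiver.Path.nil : Quiver.Path j j) = 0
  sum_one : (∑ i : V, ι (Quiver.Path.nil : Quiver.Path i i)) = 1
  len_two : ∀ {i j : V} (p : Quiver.Path i j), Z p → 2 ≤ p.length
  admissible : ∃ d : ℕ, ∀ {i j : V} (p : Quiver.Path i j), d ≤ p.length → Z p
  z_mul : ∀ {i j l : V} (p : Quiver.Path i j) (q : Quiver.Path j l),
    Z p ∨ Z q → Z (p.comp q)
  indep : LinearIndependent k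
    (fun x : {y : Σ i j : V, Quiver.Path i j // ¬ Z y.2.2} => ι x.1.2.2)
  span_top : Submodule.span k
    (Set.range (fun x : Σ i j : V, Quiver.Path i j => ι x.2.2)) = ⊤

/-- The type of paths of a quiver, bundled with their endpoints. -/
abbrev PathIn (V : Type w) [Quiver.{w} V] : Type w := Σ i j : V, Quiver.Path i j

/-- The type of arrows of a quiver, bundled with their endpoints. -/
abbrev ArrowIn (V : Type w) [Quiver.{w} V] : Type w := Σ i j : V, (i ⟶ j)

/-- `x` is a sub-path of `y`. -/
def IsSubpathIn {V : Type w} [Quiver.{w} V] (x y : PathIn V) : Prop :=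
  ∃ (r : Quiver.Path y.1 x.1) (s : Quiver.Path x.2.1 y.2.1),
    y.2.2 = (r.comp x.2.2).comp s

namespace MonomialPresentation

variable {k : Type u} {A : Type v} {V : Type w}
  [Field k] [Ring A] [Algebra k A] [Quiver.{w} V] [Fintype V]
  (P : MonomialPresentation k A V)

/-- `L(p)`: the right-minimal paths `q` among the nonzero paths with
`s(q) = t(p)` and `qp = 0` in `A`. -/
def LSet {i j : V} (p : Quiver.Path i j) : Set (PathIn V) :=
  {q | ¬ P.Z q.2.2 ∧ q.1 = j ∧ P.ι q.2.2 * P.ι p = 0 ∧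
    ¬ ∃ r u : PathIn V, ¬ P.Z r.2.2 ∧ r.1 = j ∧ P.ι r.2.2 * P.ι p = 0 ∧
      1 ≤ u.2.2.length ∧ P.ι q.2.2 = P.ι u.2.2 * P.ι r.2.2}

/-- `R(p)`: the left-minimal paths `q` among the nonzero paths with
`t(q) = s(p)` and `pq = 0` in `A`. -/
def RSet {i j : V} (p : Quiver.Path i j) : Set (PathIn V) :=
  {q | ¬ P.Z q.2.2 ∧ q.2.1 = i ∧ P.ι p * P.ι q.2.2 = 0 ∧
    ¬ ∃ r u : PathIn V, ¬ P.Z r.2.2 ∧ r.2.1 = i ∧ P.ι p * P.ι r.2.2 = 0 ∧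
      1 ≤ u.2.2.length ∧ P.ι q.2.2 = P.ι r.2.2 * P.ι u.2.2}

/-- A perfect pair `(p, q)` of nonzero nontrivial paths with `s(p) = t(q)`:
`pq = 0`, `R(p) = {q}` and `L(q) = {p}`. -/
def PerfectPair {i j l : V} (p : Quiver.Path i j) (q : Quiver.Path l i) : Prop :=
  1 ≤ p.length ∧ 1 ≤ q.length ∧ ¬ P.Z p ∧ ¬ P.Z q ∧ P.Z (q.comp p) ∧
  (∀ (m : V) (q' : Quiver.Path m i), ¬ P.Z q' → P.Z (q'.comp p) →
    ∃ x : Quiver.Path m l, q' = x.comp q) ∧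
  (∀ (m : V) (p' : Quiver.Path i m), ¬ P.Z p' → P.Z (q.comp p') →
    ∃ y : Quiver.Path j m, p' = p.comp y)

/-- The perfect pair relation on bundled paths. -/
def PerfectPairS (x y : PathIn V) : Prop :=
  ∃ (i j l : V) (p : Quiver.Path i j) (q : Quiver.Path l i),
    x = ⟨i, j, p⟩ ∧ y = ⟨l, i, q⟩ ∧ P.PerfectPair p q

/-- A perfect path: a nonzero path `p` admitting a sequence
`p = p₁, p₂, …, pₙ, pₙ₊₁ = p` in which all consecutive pairs are perfect. -/
def IsPerfectPath (x : PathIn V) : Prop :=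
  ∃ (n : ℕ) (c : Fin (n + 2) → PathIn V), c 0 = x ∧ c (Fin.last (n + 1)) = x ∧
    ∀ m : Fin (n + 1), P.PerfectPairS (c m.castSucc) (c m.succ)

/-- `x ∈ F`: `x` is a minimal path contained in the ideal `I`. -/
def InF (x : PathIn V) : Prop :=
  P.Z x.2.2 ∧ ∀ y : PathIn V, IsSubpathIn y x → y ≠ x → ¬ P.Z y.2.2

/-- The algebra is quadratic monomial: all minimal relations have length two. -/
def Quadratic : Prop := ∀ x : PathIn V, P.InF x → x.2.2.length = 2

/-- The arrow relation of the relation quiver `R_A`: there is an arrow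
`α → β` when `t(α) = s(β)` and `βα ∈ F`. -/
def RQ (x y : ArrowIn V) : Prop :=
  ∃ (i j l : V) (α : i ⟶ j) (β : j ⟶ l), x = ⟨i, j, α⟩ ∧ y = ⟨j, l, β⟩ ∧
    P.InF ⟨i, l, (α.toPath).comp β.toPath⟩

/-- The two vertices of the relation quiver lie in the same connected component. -/
def Conn (x y : ArrowIn V) : Prop :=
  Relation.ReflTransGen (fun a b => P.RQ a b ∨ P.RQ b a) x y

/-- The connected component of `x` in the relation quiver is a basic cycle:
every vertex of the component has a unique successor and a unique predecessor. -/
def InPerfectComponent (x : ArrowIn V) : Prop :=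
  ∀ y : ArrowIn V, P.Conn x y → (∃! z, P.RQ y z) ∧ (∃! z, P.RQ z y)

/-- The connected component of `x` in the relation quiver contains no oriented cycle. -/
def InAcyclicComponent (x : ArrowIn V) : Prop :=
  ∀ y : ArrowIn V, P.Conn x y → ¬ Relation.TransGen P.RQ y y

end MonomialPresentation

/-- The quiver is a basic `n`-cycle. -/
def IsBasicCycleQuiver (V : Type w) [Quiver.{w} V] : Prop :=
  ∃ n : ℕ, 0 < n ∧ ∃ f : V ≃ ZMod n,
    (∀ i j : V, Nonempty (i ⟶ j) ↔ f j = f i + 1) ∧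
    (∀ (i j : V) (a b : i ⟶ j), a = b)

/-- The underlying graph of the quiver is connected. -/
def QuiverConnected (V : Type w) [Quiver.{w} V] : Prop :=
  Nonempty V ∧ ∀ i j : V,
    Relation.ReflTransGen (fun a b => Nonempty (a ⟶ b) ∨ Nonempty (b ⟶ a)) i j

/-- The quiver has no sources. -/
def NoSources (V : Type w) [Quiver.{w} V] : Prop := ∀ j : V, ∃ i : V, Nonempty (i ⟶ j)

/-- The quiver has no sinks. -/
def NoSinks (V : Type w) [Quiver.{w} V] : Prop := ∀ i : V, ∃ j : V, Nonempty (i ⟶ j)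

section AuxLemmas

open Quiver Quiver.Path

variable {V' : Type w} [Quiver.{w} V']

private lemma PP_path_split {a b b' c : V'} (y : Path b c) (x : Path a b) (z : Path a b')
    (w : Path b' c) (h : x.comp y = z.comp w) (hle : y.length ≤ w.length) :
    ∃ m : Path b' b, x = z.comp m ∧ w = m.comp y := by
  induction y with
  | nil => exact ⟨w, by simpa using h, rfl⟩
  | cons y' e ih =>
    cases w with
    | nil => simp at hle
    | cons w' e' =>
      rw [comp_cons, comp_cons] at h
      obtain rfl := obj_eq_of_cons_eq_cons h
      have h1 : x.comp y' = z.comp w' := eq_of_heq (heq_of_cons_eq_cons h)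
      have h2 : e = e' := eq_of_heq (hom_heq_of_cons_eq_cons h)
      obtain ⟨m, hm1, hm2⟩ := ih w' h1 (by simpa using hle)
      exact ⟨m, hm1, by rw [comp_cons, ← hm2, h2]⟩

private lemma PP_straddle {m i j c d : V'} (x : Path m i) (y : Path i j) (r : Path m c)
    (δ : Path c d) (s : Path d j) (h : x.comp y = (r.comp δ).comp s) :
    (∃ s' : Path d i, x = (r.comp δ).comp s') ∨ (∃ r' : Path i c, y = (r'.comp δ).comp s) ∨
    (∃ (u : Path c i) (v : Path i d), x = r.comp u ∧ y = v.comp s ∧ δ = u.comp v ∧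
      1 ≤ u.length ∧ 1 ≤ v.length) := by
  have hlen := congrArg Quiver.Path.length h
  simp only [Quiver.Path.length_comp] at hlen
  rcases le_or_gt (r.length + δ.length) x.length with hc | hc
  · obtain ⟨m', h1, _⟩ := PP_path_split y x (r.comp δ) s h (by omega)
    exact Or.inl ⟨m', h1⟩
  · rcases le_or_gt x.length r.length with hc2 | hc2
    · obtain ⟨m', _, h2⟩ := PP_path_split (δ.comp s) r x y
        (by rw [← comp_assoc]; exact h.symm)
        (by simp only [Quiver.Path.length_comp]; omega)
      exact Or.inr (Or.inl ⟨m', by rw [h2, comp_assoc]⟩)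
    · obtain ⟨u, h1, h2⟩ := PP_path_split y x r (δ.comp s)
        (by rw [← comp_assoc]; exact h)
        (by simp only [Quiver.Path.length_comp]; omega)
      have hul : x.length = r.length + u.length := by
        have := congrArg Quiver.Path.length h1; simpa using this
      obtain ⟨v, h3, h4⟩ := PP_path_split s δ u y h2
        (by
          have := congrArg Quiver.Path.length h2
          simp only [Quiver.Path.length_comp] at this
          omega)
      have hvl := congrArg Quiver.Path.length h3
      simp only [Quiver.Path.length_comp] at hvl
      exact Or.inr (Or.inr ⟨u, v, h1, h4, h3, by omega, by omega⟩)

private lemma PP_subpath_trans {x y z : PathIn V'} (h1 : IsSubpathIn z y)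
    (h2 : IsSubpathIn y x) : IsSubpathIn z x := by
  obtain ⟨r', s', hz⟩ := h1
  obtain ⟨r, s, hy⟩ := h2
  exact ⟨r.comp r', s'.comp s, by rw [hy, hz]; simp [Quiver.Path.comp_assoc]⟩

variable {k : Type u} {A : Type v} [Field k] [Ring A] [Algebra k A] [Fintype V']

private lemma PP_exists_F_subpath (P : MonomialPresentation k A V') :
    ∀ (n : ℕ) (x : PathIn V'), x.2.2.length ≤ n → P.Z x.2.2 →
      ∃ y : PathIn V', P.InF y ∧ IsSubpathIn y x := by
  intro n
  induction n with
  | zero =>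
    intro x hlen hZ
    have := P.len_two _ hZ
    omega
  | succ n ih =>
    intro x hlen hZ
    by_cases hmin : ∀ y : PathIn V', IsSubpathIn y x → y ≠ x → ¬ P.Z y.2.2
    · exact ⟨x, ⟨hZ, hmin⟩, Quiver.Path.nil, Quiver.Path.nil, by simp⟩
    · push_neg at hmin
      obtain ⟨y, hsub, hne, hZy⟩ := hmin
      obtain ⟨r, s, heq⟩ := hsub
      have hl := congrArg Quiver.Path.length heq
      simp only [Quiver.Path.length_comp] at hl
      have hlt : y.2.2.length < x.2.2.length := by
        rcases Nat.lt_or_ge y.2.2.length x.2.2.length with h | h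
        · exact h
        · exfalso
          have hr : r.length = 0 := by omega
          have hs : s.length = 0 := by omega
          obtain ⟨x1, x2, xp⟩ := x
          obtain ⟨y1, y2, yp⟩ := y
          dsimp only at r s heq hne hl
          obtain rfl := r.eq_of_length_zero hr
          obtain rfl := s.eq_of_length_zero hs
          rw [r.eq_nil_of_length_zero hr, s.eq_nil_of_length_zero hs] at heq
          simp only [Quiver.Path.comp_nil, Quiver.Path.nil_comp] at heq
          exact hne (by rw [heq])
      obtain ⟨z, hzF, hzsub⟩ := ih y (by omega) hZy
      exact ⟨z, hzF, PP_subpath_trans hzsub ⟨r, s, heq⟩⟩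

private lemma PP_Z_superpath (P : MonomialPresentation k A V') {a b c d : V'}
    {y : Quiver.Path b c} (r : Quiver.Path a b) (s : Quiver.Path c d) (h : P.Z y) :
    P.Z ((r.comp y).comp s) :=
  P.z_mul _ s (Or.inl (P.z_mul r y (Or.inr h)))

end AuxLemmas


open MonomialPresentation in
/-- Lemma 3.3: characterization of perfect pairs via the set `F` of minimal relations:
`(p, q)` is perfect iff `pq ∈ F`, every nonzero `q'` with `t(q') = s(p)` and
`pq' = γδ` (`δ ∈ F`) is a right multiple of `q`, and every nonzero `p'` with
`s(p') = t(q)` and `p'q = δγ` (`δ ∈ F`) is a left multiple of `p`. -/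
theorem perfect_pair_iff_F_conditions (k : Type u) (A : Type v) (V : Type w)
    [Field k] [Ring A] [Algebra k A] [Quiver.{w} V] [Fintype V]
    (P : MonomialPresentation k A V) {i j l : V}
    (p : Quiver.Path i j) (q : Quiver.Path l i)
    (hp : ¬ P.Z p) (hq : ¬ P.Z q) (hlp : 1 ≤ p.length) (hlq : 1 ≤ q.length) :
    P.PerfectPair p q ↔
      (P.InF ⟨l, j, q.comp p⟩ ∧
       (∀ (m : V) (q' : Quiver.Path m i), ¬ P.Z q' →
         (∃ (c : V) (δ : Quiver.Path m c) (γ : Quiver.Path c j),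
           P.InF ⟨m, c, δ⟩ ∧ q'.comp p = δ.comp γ) →
         ∃ x : Quiver.Path m l, q' = x.comp q) ∧
       (∀ (m : V) (p' : Quiver.Path i m), ¬ P.Z p' →
         (∃ (c : V) (γ : Quiver.Path l c) (δ : Quiver.Path c m),
           P.InF ⟨c, m, δ⟩ ∧ q.comp p' = γ.comp δ) →
         ∃ y : Quiver.Path j m, p' = p.comp y)) := by
  constructor
  · rintro ⟨h1, h2, h3, h4, hZ, hR, hL⟩
    refine ⟨⟨hZ, ?_⟩, ?_, ?_⟩
    · rintro ⟨c, d, δ⟩ ⟨r, s, hsub⟩ hne hZy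
      dsimp only at r s hsub hZy
      rcases PP_straddle q p r δ s hsub with ⟨s', hE⟩ | ⟨r', hE⟩ |
          ⟨u, v, hqu, hpv, hδ, hu1, hv1⟩
      · exact hq (by rw [hE]; exact PP_Z_superpath P r s' hZy)
      · exact hp (by rw [hE]; exact PP_Z_superpath P r' s hZy)
      · have hZu : ¬ P.Z u := fun h => hq (by rw [hqu]; exact P.z_mul r u (Or.inr h))
        have hZv : ¬ P.Z v := fun h => hp (by rw [hpv]; exact P.z_mul v s (Or.inl h))
        have hZup : P.Z (u.comp p) := by
          rw [hpv, ← Quiver.Path.comp_assoc, ← hδ]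
          exact P.z_mul δ s (Or.inl hZy)
        have hZqv : P.Z (q.comp v) := by
          rw [hqu, Quiver.Path.comp_assoc, ← hδ]
          exact P.z_mul r δ (Or.inr hZy)
        obtain ⟨x', hux⟩ := hR c u hZu hZup
        obtain ⟨y', hvy⟩ := hL d v hZv hZqv
        have hlq2 := congrArg Quiver.Path.length hqu
        rw [hux] at hlq2
        simp only [Quiver.Path.length_comp] at hlq2
        have hr0 : r.length = 0 := by omega
        have hx0 : x'.length = 0 := by omega
        have hlp2 := congrArg Quiver.Path.length hpv
        rw [hvy] at hlp2
        simp only [Quiver.Path.length_comp] at hlp2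
        have hs0 : s.length = 0 := by omega
        have hy0 : y'.length = 0 := by omega
        obtain rfl := r.eq_of_length_zero hr0
        obtain rfl := s.eq_of_length_zero hs0
        rw [x'.eq_nil_of_length_zero hx0, Quiver.Path.nil_comp] at hux
        rw [y'.eq_nil_of_length_zero hy0, Quiver.Path.comp_nil] at hvy
        exact hne (by rw [hδ, hux, hvy])
    · rintro m q' hq' ⟨c, δ, γ, hδF, heq⟩
      exact hR m q' hq' (by rw [heq]; exact P.z_mul δ γ (Or.inl hδF.1))
    · rintro m p' hp' ⟨c, γ, δ, hδF, heq⟩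
      exact hL m p' hp' (by rw [heq]; exact P.z_mul γ δ (Or.inr hδF.1))
  · rintro ⟨hF, hh2, hh3⟩
    refine ⟨hlp, hlq, hp, hq, hF.1, ?_, ?_⟩
    · intro m q' hq' hZq'p
      obtain ⟨⟨c, d, δ⟩, hδF, r, s, hsub⟩ :=
        PP_exists_F_subpath P ((q'.comp p).length) ⟨m, j, q'.comp p⟩ le_rfl hZq'p
      dsimp only at r s hsub
      rcases PP_straddle q' p r δ s hsub with ⟨s', hE⟩ | ⟨r', hE⟩ |
          ⟨u, v, hq'u, hpv, hδ, hu1, hv1⟩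
      · exact absurd (by rw [hE]; exact PP_Z_superpath P r s' hδF.1) hq'
      · exact absurd (by rw [hE]; exact PP_Z_superpath P r' s hδF.1) hp
      · have hZu : ¬ P.Z u := fun h => hq' (by rw [hq'u]; exact P.z_mul r u (Or.inr h))
        obtain ⟨x', hx'⟩ := hh2 c u hZu
          ⟨d, δ, s, hδF, by rw [hpv, ← Quiver.Path.comp_assoc, ← hδ]⟩
        exact ⟨r.comp x', by rw [hq'u, hx', Quiver.Path.comp_assoc]⟩
    · intro m p' hp' hZqp'
      obtain ⟨⟨c, d, δ⟩, hδF, r, s, hsub⟩ :=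
        PP_exists_F_subpath P ((q.comp p').length) ⟨l, m, q.comp p'⟩ le_rfl hZqp'
      dsimp only at r s hsub
      rcases PP_straddle q p' r δ s hsub with ⟨s', hE⟩ | ⟨r', hE⟩ |
          ⟨u, v, hqu, hp'v, hδ, hu1, hv1⟩
      · exact absurd (by rw [hE]; exact PP_Z_superpath P r s' hδF.1) hq
      · exact absurd (by rw [hE]; exact PP_Z_superpath P r' s hδF.1) hp'
      · have hZv : ¬ P.Z v := fun h => hp' (by rw [hp'v]; exact P.z_mul v s (Or.inl h))
        obtain ⟨y', hy'⟩ := hh3 d v hZv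
          ⟨c, r, δ, hδF, by rw [hqu, Quiver.Path.comp_assoc, ← hδ]⟩
        exact ⟨y'.comp s, by rw [hp'v, hy', Quiver.Path.comp_assoc]⟩
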